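/- Let k ≥ 3 be a natural number and let A be a real symmetric positive-definite k×k matrix. If X is a real skew-symmetric k×k matrix such that X·A·Y − Y·A·X = 0 for every real skew-symmetric k×k matrix Y, then X = 0. (That is, the Lie algebra of skew-symmetric k×k matrices with the bracket ⁅X,Y⁆_A := X·A·Y − Y·A·X has trivial center whenever k ≥ 3.) -/

import Mathlib

open Matrix

private lemma transpose_E {k : ℕ} (i j : Fin k) :
    (single i j (1:ℝ))ᵀ = single j i (1:ℝ) := by
  ext a b
  simp [single, and_comm]

private lemma exists_notin_pair {k : ℕ} (hk : 3 ≤ k) (a c : Fin k) :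
    ∃ b : Fin k, b ≠ a ∧ b ≠ c := by
  have hcard : ({a, c} : Finset (Fin k)).card ≤ 2 :=
    (Finset.card_insert_le _ _).trans (by simp)
  have hcompl : 0 < ({a, c}ᶜ : Finset (Fin k)).card := by
    rw [Finset.card_compl]
    simp only [Fintype.card_fin]
    omega
  obtain ⟨b, hb⟩ := Finset.card_pos.mp hcompl
  simp only [Finset.mem_compl, Finset.mem_insert, Finset.mem_singleton, not_or] at hb
  exact ⟨b, hb.1, hb.2⟩

/-- For `k ≥ 3` and `A` a real symmetric positive-definite `k×k` matrix, the Lie algebra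
of skew-symmetric `k×k` matrices with the bracket `⁅X,Y⁆_A := X·A·Y − Y·A·X` has trivial
center: if `X` is skew-symmetric and `X·A·Y − Y·A·X = 0` for every skew-symmetric `Y`,
then `X = 0`. -/
theorem center_trivial_of_posDef (k : ℕ) (hk : 3 ≤ k)
    (A : Matrix (Fin k) (Fin k) ℝ) (hA : A.PosDef)
    (X : Matrix (Fin k) (Fin k) ℝ) (hX : Xᵀ = -X)
    (hcen : ∀ Y : Matrix (Fin k) (Fin k) ℝ, Yᵀ = -Y → X * A * Y - Y * A * X = 0) :
    X = 0 := by
  set M := X * A with hM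
  set N := A * X with hN
  -- N = -Mᵀ entrywise: N a b = - M b a
  have hNM : ∀ a b, N a b = - M b a := by
    intro a b
    have hAT : Aᵀ = A := by
      rw [← conjTranspose_eq_transpose_of_trivial]; exact hA.1.eq
    have hMt : Mᵀ = -N := by
      rw [hM, hN, transpose_mul, hAT, hX]
      simp [Matrix.mul_neg, Matrix.neg_mul]
    have := congrFun (congrFun hMt a) b
    simp only [transpose_apply, Matrix.neg_apply] at this
    linarith
  -- key entrywise identity
  have key : ∀ i j a b : Fin k, i ≠ j →
      (if b = j then M a i else 0) - (if b = i then M a j else 0)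
        - ((if a = i then N j b else 0) - (if a = j then N i b else 0)) = 0 := by
    intro i j a b hij
    have hYs : (single i j (1:ℝ) - single j i 1)ᵀ
        = -(single i j (1:ℝ) - single j i 1) := by
      rw [transpose_sub, transpose_E, transpose_E, neg_sub]
    have h := hcen _ hYs
    have h2 := congrFun (congrFun h a) b
    have e1 : ((M * (single i j (1:ℝ) - single j i 1) : Matrix (Fin k) (Fin k) ℝ)) a b
        = (if b = j then M a i else 0) - (if b = i then M a j else 0) := by
      rw [Matrix.mul_sub]
      rw [Matrix.sub_apply]
      congr 1
      · by_cases hbj : b = j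
        · subst hbj; simp [mul_single_apply_same]
        · simp [hbj]
      · by_cases hbi : b = i
        · subst hbi; simp [mul_single_apply_same]
        · simp [hbi]
    have e2 : (((single i j (1:ℝ) - single j i 1) * A * X : Matrix (Fin k) (Fin k) ℝ)) a b
        = (if a = i then N j b else 0) - (if a = j then N i b else 0) := by
      rw [Matrix.mul_assoc, Matrix.sub_mul, Matrix.sub_apply]
      congr 1
      · by_cases hai : a = i
        · subst hai; simp [← hN, single_mul_apply_same]
        · simp [hai]
      · by_cases haj : a = j
        · subst haj; simp [← hN, single_mul_apply_same]
        · simp [haj]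
    rw [Matrix.sub_apply, e1, e2] at h2
    exact h2
  -- off-diagonal entries of M vanish
  have hoff : ∀ a c : Fin k, a ≠ c → M a c = 0 := by
    intro a c hac
    obtain ⟨b, hba, hbc⟩ := exists_notin_pair hk a c
    have h := key b c a b hbc
    rw [if_neg hbc, if_pos rfl, if_neg (Ne.symm hba), if_neg hac] at h
    linarith
  -- diagonal relation: M a a = - M b b for a ≠ b
  have hdiag : ∀ a b : Fin k, a ≠ b → M a a = - M b b := by
    intro a b hab
    have h := key a b a b hab
    rw [if_pos rfl, if_neg (Ne.symm hab), if_pos rfl, if_neg hab] at h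
    have := hNM b b
    linarith
  -- diagonal entries vanish
  have hdiag0 : ∀ a : Fin k, M a a = 0 := by
    intro a
    obtain ⟨b, hba, _⟩ := exists_notin_pair hk a a
    obtain ⟨c, hca, hcb⟩ := exists_notin_pair hk a b
    have h1 := hdiag a b (Ne.symm hba)
    have h2 := hdiag b c (Ne.symm hcb)
    have h3 := hdiag a c (Ne.symm hca)
    linarith
  have hM0 : M = 0 := by
    ext a b
    by_cases hab : a = b
    · subst hab; simpa using hdiag0 a
    · simpa using hoff a b hab
  -- conclude X = 0 using invertibility of A
  have hdet : IsUnit A.det := isUnit_iff_ne_zero.mpr (ne_of_gt hA.det_pos)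
  calc X = X * A * A⁻¹ := by rw [Matrix.mul_assoc, Matrix.mul_nonsing_inv _ hdet, Matrix.mul_one]
    _ = 0 := by rw [← hM, hM0, Matrix.zero_mul]
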